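/- Let Y be a CAT(κ) space and G a closed rectifiable curve in Y of length strictly less than 2·R_κ. Then the image of G is contained in a closed ball of radius r < R_κ/2 in Y. -/

import Mathlib

open Set Metric ENNReal unitInterval

noncomputable section

/-- The length of a curve parametrized by the unit interval, as total variation. -/
def curveELength {Y : Type*} [PseudoEMetricSpace Y] (c : unitInterval → Y) : ℝ≥0∞ :=
  eVariationOn c Set.univ

/-- The length pseudodistance induced by a map `f : X → Y`: the infimum of the lengths of
`f ∘ γ` over all curves `γ` joining the two points (`⊤` if there is no such curve). -/
def lengthPd {X Y : Type*} [TopologicalSpace X] [PseudoEMetricSpace Y]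
    (f : X → Y) (x z : X) : ℝ≥0∞ :=
  ⨅ γ : Path x z, curveELength (fun t => f (γ t))

/-- `f` is length-connected: the induced length pseudodistance is everywhere finite. -/
def LengthConnected {X Y : Type*} [TopologicalSpace X] [PseudoEMetricSpace Y]
    (f : X → Y) : Prop :=
  ∀ x z : X, lengthPd f x z ≠ ⊤

/-- The connecting pseudodistance induced by `f`: infimum of `diam (f '' C)` over connected
sets `C` containing both points. -/
def connPd {X Y : Type*} [TopologicalSpace X] [PseudoEMetricSpace Y]
    (f : X → Y) (x z : X) : ℝ≥0∞ :=
  ⨅ C : {C : Set X // IsConnected C ∧ x ∈ C ∧ z ∈ C}, EMetric.diam (f '' (C : Set X))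

/-- `g` does not increase the length of any curve, compared with `f`. -/
def IsShorter {X Y : Type*} [TopologicalSpace X] [PseudoEMetricSpace Y]
    (f g : X → Y) : Prop :=
  ∀ c : C(unitInterval, X), curveELength (fun t => g (c t)) ≤ curveELength (fun t => f (c t))

/-- `f` is length-minimizing relative to `Z`: any continuous competitor agreeing with `f`
on `Z` and not increasing the length of any curve in fact preserves all curve lengths. -/
def LengthMinimizing {X Y : Type*} [TopologicalSpace X] [PseudoEMetricSpace Y]
    (f : X → Y) (Z : Set X) : Prop :=
  Continuous f ∧ ∀ g : X → Y, Continuous g → Set.EqOn f g Z → IsShorter f g →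
    ∀ c : C(unitInterval, X), curveELength (fun t => g (c t)) = curveELength (fun t => f (c t))

/-- `γ : ℝ → Y` is a unit-speed geodesic from `x` to `y` (on `[0, dist x y]`). -/
def IsGeodesicParam {Y : Type*} [MetricSpace Y] (γ : ℝ → Y) (x y : Y) : Prop :=
  γ 0 = x ∧ γ (dist x y) = y ∧
    ∀ s ∈ Set.Icc (0:ℝ) (dist x y), ∀ t ∈ Set.Icc (0:ℝ) (dist x y),
      dist (γ s) (γ t) = |s - t|

/-- A geodesic metric space: any two points are joined by a geodesic. -/
def IsGeodesicSpace (Y : Type*) [MetricSpace Y] : Prop :=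
  ∀ x y : Y, ∃ γ : ℝ → Y, IsGeodesicParam γ x y

/-- The diameter `R_κ` of the model surface `M_κ`: `π/√κ` for `κ > 0`, `∞` otherwise. -/
def modelDiam (κ : ℝ) : ℝ≥0∞ :=
  if κ ≤ 0 then ⊤ else ENNReal.ofReal (Real.pi / Real.sqrt κ)

/-- Cosine of the angle opposite the side of length `c` in a triangle of side lengths
`a`, `b`, `c` in the model plane of curvature `κ` (law of cosines). -/
def modelCosAngle (κ a b c : ℝ) : ℝ :=
  if κ = 0 then (a ^ 2 + b ^ 2 - c ^ 2) / (2 * a * b)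
  else if 0 < κ then
    (Real.cos (Real.sqrt κ * c) - Real.cos (Real.sqrt κ * a) * Real.cos (Real.sqrt κ * b)) /
      (Real.sin (Real.sqrt κ * a) * Real.sin (Real.sqrt κ * b))
  else
    (Real.cosh (Real.sqrt (-κ) * a) * Real.cosh (Real.sqrt (-κ) * b) -
        Real.cosh (Real.sqrt (-κ) * c)) /
      (Real.sinh (Real.sqrt (-κ) * a) * Real.sinh (Real.sqrt (-κ) * b))

/-- Distance in the model plane of curvature `κ` between the endpoints of two segments of
lengths `a` and `b` emanating from a common vertex at an angle with cosine `cosθ`. -/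
def modelSideLength (κ a b cosθ : ℝ) : ℝ :=
  if κ = 0 then Real.sqrt (a ^ 2 + b ^ 2 - 2 * a * b * cosθ)
  else if 0 < κ then
    Real.arccos (Real.cos (Real.sqrt κ * a) * Real.cos (Real.sqrt κ * b) +
      Real.sin (Real.sqrt κ * a) * Real.sin (Real.sqrt κ * b) * cosθ) / Real.sqrt κ
  else
    -- `Real.log (x + √(x² - 1))` is the inverse hyperbolic cosine `arcosh x`
    Real.log ((Real.cosh (Real.sqrt (-κ) * a) * Real.cosh (Real.sqrt (-κ) * b) -
        Real.sinh (Real.sqrt (-κ) * a) * Real.sinh (Real.sqrt (-κ) * b) * cosθ) +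
      Real.sqrt ((Real.cosh (Real.sqrt (-κ) * a) * Real.cosh (Real.sqrt (-κ) * b) -
        Real.sinh (Real.sqrt (-κ) * a) * Real.sinh (Real.sqrt (-κ) * b) * cosθ) ^ 2 - 1)) /
      Real.sqrt (-κ)

/-- `Y` is a CAT(κ) space: complete, geodesic, and every geodesic triangle of perimeter
`< 2 R_κ` satisfies the point-side comparison with its model triangle in `M_κ`. -/
def IsCATSpace (κ : ℝ) (Y : Type*) [MetricSpace Y] : Prop :=
  CompleteSpace Y ∧ IsGeodesicSpace Y ∧
    ∀ p q r : Y, ∀ γ : ℝ → Y, IsGeodesicParam γ p q →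
      ENNReal.ofReal (dist p q + dist q r + dist r p) < 2 * modelDiam κ →
      ∀ s ∈ Set.Icc (0:ℝ) (dist p q),
        dist (γ s) r ≤
          modelSideLength κ s (dist p r) (modelCosAngle κ (dist p q) (dist p r) (dist q r))

/-- A set is geodesically convex if every geodesic between its points stays inside it. -/
def IsGeodesicallyConvex {Y : Type*} [MetricSpace Y] (K : Set Y) : Prop :=
  ∀ x ∈ K, ∀ y ∈ K, ∀ γ : ℝ → Y, IsGeodesicParam γ x y →
    ∀ t ∈ Set.Icc (0:ℝ) (dist x y), γ t ∈ K

/-- A finite graph (connected finite one-dimensional CW complex) structure on a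
topological space `Γ`: finitely many edges, injective away from endpoints, with
endpoints in a finite vertex set, covering `Γ`. -/
structure FiniteGraphStruct (Γ : Type*) [TopologicalSpace Γ] where
  n : ℕ
  edge : Fin n → C(unitInterval, Γ)
  vertices : Set Γ
  vertices_finite : vertices.Finite
  endpoints_mem : ∀ i, edge i 0 ∈ vertices ∧ edge i 1 ∈ vertices
  inj_on : ∀ i, Set.InjOn (edge i) {t : unitInterval | t ≠ 0 ∧ t ≠ 1}
  cover : ∀ x : Γ, x ∈ vertices ∨ ∃ i t, edge i t = x

end


lemma arccos_anti {x y : ℝ} (h : x ≤ y) : Real.arccos y ≤ Real.arccos x := by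
  rw [Real.arccos_eq_pi_div_two_sub_arcsin, Real.arccos_eq_pi_div_two_sub_arcsin]
  exact sub_le_sub_left (Real.monotone_arcsin h) _

lemma half_le_r0 {κ L : ℝ} (hκ : 0 < κ) (hL : 0 < L) (hLR : Real.sqrt κ * L < Real.pi) :
    L / 2 ≤ Real.arccos (Real.cos (Real.sqrt κ * L / 2) ^ 2) / Real.sqrt κ := by
  have hδ : 0 < Real.sqrt κ := Real.sqrt_pos.2 hκ
  have hLpos : 0 < Real.sqrt κ * L := by positivity
  have hcpos : 0 < Real.cos (Real.sqrt κ * L / 2) := by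
    apply Real.cos_pos_of_mem_Ioo
    constructor <;> [linarith [Real.pi_pos]; linarith]
  have hcle : Real.cos (Real.sqrt κ * L / 2) ≤ 1 := Real.cos_le_one _
  have hsq : Real.cos (Real.sqrt κ * L / 2) ^ 2 ≤ Real.cos (Real.sqrt κ * L / 2) := by
    nlinarith
  have h1 : Real.sqrt κ * L / 2 = Real.arccos (Real.cos (Real.sqrt κ * L / 2)) :=
    (Real.arccos_cos (by linarith) (by linarith)).symm
  rw [le_div_iff₀ hδ]
  calc L / 2 * Real.sqrt κ = Real.sqrt κ * L / 2 := by ring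
    _ = Real.arccos (Real.cos (Real.sqrt κ * L / 2)) := h1
    _ ≤ Real.arccos (Real.cos (Real.sqrt κ * L / 2) ^ 2) := arccos_anti hsq

lemma r0_lt_half_R {κ L : ℝ} (hκ : 0 < κ) (hL : 0 < L) (hLR : Real.sqrt κ * L < Real.pi) :
    Real.arccos (Real.cos (Real.sqrt κ * L / 2) ^ 2) / Real.sqrt κ
      < Real.pi / Real.sqrt κ / 2 := by
  have hδ : 0 < Real.sqrt κ := Real.sqrt_pos.2 hκ
  have hLpos : 0 < Real.sqrt κ * L := by positivity
  have hcpos : 0 < Real.cos (Real.sqrt κ * L / 2) := by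
    apply Real.cos_pos_of_mem_Ioo
    constructor <;> [linarith [Real.pi_pos]; linarith]
  have harc : Real.arccos (Real.cos (Real.sqrt κ * L / 2) ^ 2) < Real.pi / 2 :=
    Real.arccos_lt_pi_div_two.2 (by positivity)
  rw [div_lt_div_iff₀ hδ (by norm_num : (0:ℝ) < 2)]
  have : Real.pi / Real.sqrt κ / 2 * (Real.sqrt κ * 2) = Real.pi := by field_simp
  nlinarith

lemma alg_median {cA sA cX sX cY : ℝ} (hsA : sA ≠ 0) (hcA : cA ≠ 0) (hsX : sX ≠ 0) :
    cA * cX + sA * sX * ((cY - (2 * cA ^ 2 - 1) * cX) / (2 * sA * cA * sX))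
      = (cX + cY) / (2 * cA) := by
  field_simp
  ring

lemma trig_bound {κ L a x y : ℝ} (hκ : 0 < κ) (hL : 0 < L)
    (hLR : Real.sqrt κ * L < Real.pi) (ha0 : 0 < a) (haL : a ≤ L)
    (hx : 0 ≤ x) (hy : 0 ≤ y) (hxy : x + y ≤ L) :
    modelSideLength κ (a / 2) x (modelCosAngle κ a x y)
      ≤ Real.arccos (Real.cos (Real.sqrt κ * L / 2) ^ 2) / Real.sqrt κ := by
  have hδ : 0 < Real.sqrt κ := Real.sqrt_pos.2 hκ
  have hπ := Real.pi_pos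
  have haπ : Real.sqrt κ * a < Real.pi := lt_of_le_of_lt (by nlinarith) hLR
  have ha2lo : 0 < Real.sqrt κ * (a / 2) := by positivity
  have ha2hi : Real.sqrt κ * (a / 2) < Real.pi / 2 := by nlinarith
  have hcos_a2 : 0 < Real.cos (Real.sqrt κ * (a / 2)) :=
    Real.cos_pos_of_mem_Ioo ⟨by linarith, by linarith⟩
  have hsin_a2 : 0 < Real.sin (Real.sqrt κ * (a / 2)) :=
    Real.sin_pos_of_pos_of_lt_pi ha2lo (by linarith)
  have hcL : 0 < Real.cos (Real.sqrt κ * L / 2) :=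
    Real.cos_pos_of_mem_Ioo ⟨by nlinarith, by nlinarith⟩
  have hxπ : Real.sqrt κ * x < Real.pi := by nlinarith
  rw [modelSideLength, if_neg hκ.ne', if_pos hκ]
  by_cases hx0 : x = 0
  · subst hx0
    have he : Real.cos (Real.sqrt κ * (a / 2)) * Real.cos (Real.sqrt κ * 0) +
        Real.sin (Real.sqrt κ * (a / 2)) * Real.sin (Real.sqrt κ * 0) *
          modelCosAngle κ a 0 y = Real.cos (Real.sqrt κ * (a / 2)) := by
      simp [mul_zero]
    rw [he, Real.arccos_cos (by linarith) (by linarith)]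
    have h1 : Real.sqrt κ * (a / 2) / Real.sqrt κ = a / 2 := by
      field_simp
    rw [h1]
    exact le_trans (by linarith) (half_le_r0 hκ hL hLR)
  have hx0' : 0 < x := lt_of_le_of_ne hx (Ne.symm hx0)
  have hsinx : 0 < Real.sin (Real.sqrt κ * x) :=
    Real.sin_pos_of_pos_of_lt_pi (by positivity) hxπ
  have hsina : 0 < Real.sin (Real.sqrt κ * a) :=
    Real.sin_pos_of_pos_of_lt_pi (by positivity) haπ
  rw [modelCosAngle, if_neg hκ.ne', if_pos hκ]
  have key : Real.cos (Real.sqrt κ * (a / 2)) * Real.cos (Real.sqrt κ * x) +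
      Real.sin (Real.sqrt κ * (a / 2)) * Real.sin (Real.sqrt κ * x) *
        ((Real.cos (Real.sqrt κ * y) - Real.cos (Real.sqrt κ * a) * Real.cos (Real.sqrt κ * x)) /
          (Real.sin (Real.sqrt κ * a) * Real.sin (Real.sqrt κ * x)))
      = (Real.cos (Real.sqrt κ * x) + Real.cos (Real.sqrt κ * y)) /
          (2 * Real.cos (Real.sqrt κ * (a / 2))) := by
    have hda : Real.sqrt κ * a = 2 * (Real.sqrt κ * (a / 2)) := by ring
    rw [hda, Real.sin_two_mul, Real.cos_two_mul]
    exact alg_median hsin_a2.ne' hcos_a2.ne' hsinx.ne'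
  rw [key]
  gcongr
  rw [Real.cos_add_cos]
  have hsum : (Real.sqrt κ * x + Real.sqrt κ * y) / 2 ≤ Real.sqrt κ * L / 2 := by nlinarith
  have h1 : Real.cos (Real.sqrt κ * L / 2) ≤
      Real.cos ((Real.sqrt κ * x + Real.sqrt κ * y) / 2) :=
    Real.cos_le_cos_of_nonneg_of_le_pi (by positivity) (by linarith) hsum
  have h2 : Real.cos (Real.sqrt κ * L / 2) ≤
      Real.cos ((Real.sqrt κ * x - Real.sqrt κ * y) / 2) := by
    rw [← Real.cos_abs ((Real.sqrt κ * x - Real.sqrt κ * y) / 2)]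
    refine Real.cos_le_cos_of_nonneg_of_le_pi (abs_nonneg _) (by linarith) ?_
    have hb : |(Real.sqrt κ * x - Real.sqrt κ * y) / 2| ≤
        (Real.sqrt κ * x + Real.sqrt κ * y) / 2 := by
      rw [abs_le]
      constructor <;> nlinarith [mul_nonneg hδ.le hx, mul_nonneg hδ.le hy]
    linarith
  rw [le_div_iff₀ (by positivity)]
  have hc2le : Real.cos (Real.sqrt κ * (a / 2)) ≤ 1 := Real.cos_le_one _
  nlinarith [sq_nonneg (Real.cos (Real.sqrt κ * L / 2)), hcL, h1, h2, hcos_a2]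


lemma evar_left_cont {Y : Type*} [PseudoEMetricSpace Y] {g : ℝ → Y} (hg : Continuous g)
    {a : ℝ} (ha : 0 < a) (M : ℝ≥0∞)
    (hM : ∀ t, 0 ≤ t → t < a → eVariationOn g (Set.Icc 0 t) ≤ M) :
    eVariationOn g (Set.Icc 0 a) ≤ M := by
  rcases eq_top_or_lt_top M with rfl | hMtop
  · exact le_top
  rw [eVariationOn]
  refine iSup_le ?_
  rintro ⟨n, u, hu, us⟩
  refine ENNReal.le_of_forall_pos_le_add fun ε hε _ => ?_
  have hne0 : (4 * ((n : ℝ≥0∞) + 1)) ≠ 0 := by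
    refine mul_ne_zero (by norm_num) ?_
    simp
  have hnetop : (4 * ((n : ℝ≥0∞) + 1)) ≠ ⊤ := by
    refine ENNReal.mul_ne_top (by norm_num) ?_
    exact ENNReal.add_ne_top.2 ⟨ENNReal.natCast_ne_top n, one_ne_top⟩
  set ε₀ : ℝ≥0∞ := (ε : ℝ≥0∞) / (4 * ((n : ℝ≥0∞) + 1)) with hε₀def
  have hε₀ : 0 < ε₀ := ENNReal.div_pos (by exact_mod_cast hε.ne') hnetop
  have hcont := hg.continuousAt (x := a)
  rw [ContinuousAt, EMetric.tendsto_nhds] at hcont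
  obtain ⟨δ, hδ, hball⟩ := Metric.eventually_nhds_iff.1 (hcont ε₀ hε₀)
  set c : ℝ := max (a - δ / 2) (a / 2) with hcdef
  have hc0 : 0 ≤ c := le_trans (by linarith) (le_max_right _ _)
  have hca : c < a := max_lt (by linarith) (by linarith)
  have hcd : a - c ≤ δ / 2 := by
    have : a - δ / 2 ≤ c := le_max_left _ _
    linarith
  have hgc : edist (g c) (g a) < ε₀ := by
    refine hball ?_
    rw [Real.dist_eq, abs_sub_comm, abs_of_nonneg (by linarith)]
    linarith
  set u' : ℕ → ℝ := fun i => min (u i) c with hu'def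
  have hu' : Monotone u' := fun i j h => min_le_min (hu h) le_rfl
  have us' : ∀ i, u' i ∈ Set.Icc (0 : ℝ) c := fun i => ⟨le_min (us i).1 hc0, min_le_right _ _⟩
  have hgap : ∀ i, edist (g (u i)) (g (u' i)) ≤ 2 * ε₀ := by
    intro i
    by_cases h : u i ≤ c
    · have : u' i = u i := min_eq_left h
      rw [this, edist_self]
      exact zero_le
    · push_neg at h
      have h1 : u' i = c := min_eq_right h.le
      rw [h1]
      have hui : edist (g (u i)) (g a) < ε₀ := by
        refine hball ?_
        rw [Real.dist_eq, abs_sub_comm, abs_of_nonneg (by linarith [(us i).2])]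
        have := (us i).2
        linarith
      calc edist (g (u i)) (g c) ≤ edist (g (u i)) (g a) + edist (g a) (g c) :=
            edist_triangle _ _ _
        _ ≤ ε₀ + ε₀ := add_le_add hui.le (by rw [edist_comm]; exact hgc.le)
        _ = 2 * ε₀ := (two_mul _).symm
  calc ∑ i ∈ Finset.range n, edist (g (u (i + 1))) (g (u i))
      ≤ ∑ i ∈ Finset.range n, (edist (g (u' (i + 1))) (g (u' i)) + (2 * ε₀ + 2 * ε₀)) := by
        refine Finset.sum_le_sum fun i _ => ?_
        calc edist (g (u (i + 1))) (g (u i))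
            ≤ edist (g (u (i + 1))) (g (u' (i + 1))) + edist (g (u' (i + 1))) (g (u' i)) +
              edist (g (u' i)) (g (u i)) := edist_triangle4 _ _ _ _
          _ ≤ 2 * ε₀ + edist (g (u' (i + 1))) (g (u' i)) + 2 * ε₀ := by
              refine add_le_add (add_le_add (hgap _) le_rfl) ?_
              rw [edist_comm]; exact hgap i
          _ = edist (g (u' (i + 1))) (g (u' i)) + (2 * ε₀ + 2 * ε₀) := by ring
    _ = (∑ i ∈ Finset.range n, edist (g (u' (i + 1))) (g (u' i))) + n * (2 * ε₀ + 2 * ε₀) := by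
        rw [Finset.sum_add_distrib, Finset.sum_const, Finset.card_range, nsmul_eq_mul]
    _ ≤ M + ε := by
        refine add_le_add ?_ ?_
        · exact le_trans (eVariationOn.sum_le (f := g) (n := n) hu' us') (hM c hc0 hca)
        · calc (n : ℝ≥0∞) * (2 * ε₀ + 2 * ε₀) = (4 * (n : ℝ≥0∞)) * ε₀ := by ring
            _ ≤ (4 * ((n : ℝ≥0∞) + 1)) * ε₀ := by
                refine mul_le_mul_left ?_ _
                exact mul_le_mul_right (le_add_of_nonneg_right zero_le) _
            _ = ε := ENNReal.mul_div_cancel hne0 hnetop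

lemma evar_right_cont {Y : Type*} [PseudoEMetricSpace Y] {g : ℝ → Y} (hg : Continuous g)
    {a : ℝ} (ha : a < 1) (M : ℝ≥0∞)
    (hM : ∀ t, a < t → t ≤ 1 → eVariationOn g (Set.Icc t 1) ≤ M) :
    eVariationOn g (Set.Icc a 1) ≤ M := by
  have hrefl : ∀ b c : ℝ, eVariationOn (g ∘ fun t => 1 - t) (Set.Icc b c)
      = eVariationOn g (Set.Icc (1 - c) (1 - b)) := by
    intro b c
    rw [eVariationOn.comp_eq_of_antitoneOn g (fun t => 1 - t)
      (fun s _ t _ hst => by simp only; linarith), Set.image_const_sub_Icc]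
  have key : eVariationOn (g ∘ fun t => 1 - t) (Set.Icc 0 (1 - a)) ≤ M := by
    refine evar_left_cont (hg.comp (by continuity)) (by linarith) M fun t ht htlt => ?_
    rw [hrefl]
    have h1 : (1 : ℝ) - 0 = 1 := by ring
    rw [h1]
    exact hM (1 - t) (by linarith) (by linarith)
  rw [hrefl] at key
  have h2 : (1 : ℝ) - (1 - a) = a := by ring
  rw [h2] at key
  have h3 : (1 : ℝ) - 0 = 1 := by ring
  rwa [h3] at key

lemma evar_bisect {Y : Type*} [PseudoEMetricSpace Y] {g : ℝ → Y} (hg : Continuous g)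
    {M : ℝ≥0∞} (hM : eVariationOn g (Set.Icc 0 1) < 2 * M) :
    ∃ t₀ ∈ Set.Icc (0 : ℝ) 1,
      eVariationOn g (Set.Icc 0 t₀) ≤ M ∧ eVariationOn g (Set.Icc t₀ 1) ≤ M := by
  rcases eq_top_or_lt_top M with rfl | hMtop
  · exact ⟨0, ⟨le_refl _, zero_le_one⟩, le_top, le_top⟩
  have hadd : ∀ t, 0 ≤ t → t ≤ 1 →
      eVariationOn g (Set.Icc 0 t) + eVariationOn g (Set.Icc t 1)
        = eVariationOn g (Set.Icc (0:ℝ) 1) := by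
    intro t ht ht1
    have := eVariationOn.Icc_add_Icc g (s := Set.univ) ht ht1 (Set.mem_univ t)
    simpa using this
  have hsing : ∀ t : ℝ, eVariationOn g (Set.Icc t t) = 0 := by
    intro t
    rw [Set.Icc_self]
    exact eVariationOn.subsingleton g (Set.subsingleton_singleton)
  set S : Set ℝ := {t | t ∈ Set.Icc (0:ℝ) 1 ∧ M ≤ eVariationOn g (Set.Icc 0 t)} with hSdef
  by_cases hS : S.Nonempty
  · have hbdd : BddBelow S := ⟨0, fun t ht => ht.1.1⟩
    set t₀ : ℝ := sInf S with ht₀def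
    obtain ⟨t1, ht1⟩ := hS
    have ht₀0 : 0 ≤ t₀ := le_csInf ⟨t1, ht1⟩ fun t ht => ht.1.1
    have ht₀1 : t₀ ≤ 1 := le_trans (csInf_le hbdd ht1) ht1.1.2
    refine ⟨t₀, ⟨ht₀0, ht₀1⟩, ?_, ?_⟩
    · rcases eq_or_lt_of_le ht₀0 with h0 | h0
      · rw [← h0, hsing]
        exact zero_le
      · refine evar_left_cont hg h0 M fun t ht htlt => ?_
        have : t ∉ S := fun hmem => absurd (csInf_le hbdd hmem) (not_le.2 htlt)
        rw [hSdef] at this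
        simp only [Set.mem_setOf_eq, not_and] at this
        exact (not_le.1 (this ⟨ht, le_trans htlt.le ht₀1⟩)).le
    · rcases eq_or_lt_of_le ht₀1 with h1 | h1
      · rw [h1, hsing]
        exact zero_le
      · refine evar_right_cont hg h1 M fun t ht htle => ?_
        obtain ⟨t', ht'S, ht't⟩ := exists_lt_of_csInf_lt ⟨t1, ht1⟩ ht
        have hvt : M ≤ eVariationOn g (Set.Icc 0 t) :=
          le_trans ht'S.2 (eVariationOn.mono g (Set.Icc_subset_Icc le_rfl ht't.le))
        have hlt : eVariationOn g (Set.Icc 0 t) + eVariationOn g (Set.Icc t 1) < M + M := by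
          rw [hadd t (le_trans ht₀0 ht.le) htle]
          calc eVariationOn g (Set.Icc (0:ℝ) 1) < 2 * M := hM
            _ = M + M := two_mul M
        have := lt_of_add_lt_add_left (lt_of_le_of_lt (add_le_add_left hvt _) hlt)
        exact this.le
  · refine ⟨1, ⟨zero_le_one, le_refl _⟩, ?_, ?_⟩
    · by_contra hcon
      exact hS ⟨1, ⟨zero_le_one, le_refl _⟩, (not_le.1 hcon).le⟩
    · rw [hsing]
      exact zero_le

/-- a closed rectifiable curve of length `< 2 R_κ` in a CAT(κ) space is
contained in a closed ball of radius `r < R_κ/2`. -/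
theorem closed_curve_in_small_ball {Y : Type*} [MetricSpace Y] (κ : ℝ)
    (hY : IsCATSpace κ Y) (G : unitInterval → Y) (hG : Continuous G)
    (hclosed : G 0 = G 1) (hlen : curveELength G < 2 * modelDiam κ) :
    ∃ (y : Y) (r : ℝ), 0 ≤ r ∧ ENNReal.ofReal r < modelDiam κ / 2 ∧
      Set.range G ⊆ Metric.closedBall y r := by
  by_cases hκ : κ ≤ 0
  · have hmd : modelDiam κ = ⊤ := by rw [modelDiam, if_pos hκ]
    rw [hmd] at hlen ⊢
    have hfin : curveELength G ≠ ⊤ := ne_top_of_lt hlen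
    refine ⟨G 0, (curveELength G).toReal, ENNReal.toReal_nonneg, ?_, ?_⟩
    · rw [ENNReal.top_div_of_ne_top (by norm_num)]
      exact ENNReal.ofReal_lt_top
    · rintro z ⟨s, rfl⟩
      rw [Metric.mem_closedBall]
      have h1 : edist (G s) (G 0) ≤ curveELength G :=
        eVariationOn.edist_le G (Set.mem_univ s) (Set.mem_univ 0)
      rw [edist_dist] at h1
      have h2 := ENNReal.toReal_mono hfin h1
      rwa [ENNReal.toReal_ofReal dist_nonneg] at h2
  push_neg at hκ
  have hδ : 0 < Real.sqrt κ := Real.sqrt_pos.2 hκ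
  have hπ := Real.pi_pos
  have hR : 0 < Real.pi / Real.sqrt κ := by positivity
  have hmd : modelDiam κ = ENNReal.ofReal (Real.pi / Real.sqrt κ) := by
    rw [modelDiam, if_neg (not_le.2 hκ)]
  rw [hmd] at hlen
  have hfin : curveELength G ≠ ⊤ :=
    ne_top_of_lt (lt_of_lt_of_le hlen (le_top : _ ≤ ⊤))
  set l := (curveELength G).toReal with hldef
  have hl0 : 0 ≤ l := ENNReal.toReal_nonneg
  have hl2R : l < 2 * (Real.pi / Real.sqrt κ) := by
    apply ENNReal.toReal_lt_of_lt_ofReal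
    calc curveELength G < 2 * ENNReal.ofReal (Real.pi / Real.sqrt κ) := hlen
      _ = ENNReal.ofReal (2 * (Real.pi / Real.sqrt κ)) := by
          rw [ENNReal.ofReal_mul (by norm_num : (0:ℝ) ≤ 2), ENNReal.ofReal_ofNat]
  set L : ℝ := (l / 2 + Real.pi / Real.sqrt κ) / 2 with hLdef
  have hL0 : 0 < L := by positivity
  have hlL : l < 2 * L := by rw [hLdef]; linarith
  have hLR : L < Real.pi / Real.sqrt κ := by rw [hLdef]; linarith
  have hLRmul : Real.sqrt κ * L < Real.pi := by
    rw [lt_div_iff₀ hδ] at hLR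
    linarith [hLR]
  set g : ℝ → Y := fun t => G (Set.projIcc 0 1 zero_le_one t) with hgdef
  have hgc : Continuous g := hG.comp continuous_projIcc
  have hsg : ∀ s : unitInterval, g s.1 = G s := by
    intro s
    rw [hgdef]
    simp only
    rw [Set.projIcc_of_mem zero_le_one s.2]
  have hgvar : eVariationOn g (Set.Icc 0 1) = curveELength G := by
    have hcomp : g = G ∘ Set.projIcc 0 1 zero_le_one := rfl
    rw [hcomp, eVariationOn.comp_eq_of_monotoneOn G _
      ((monotone_projIcc zero_le_one).monotoneOn _)]
    have himg : Set.projIcc (0:ℝ) 1 zero_le_one '' Set.Icc 0 1 = Set.univ :=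
      (Set.projIcc_surjOn zero_le_one).image_eq_of_mapsTo (Set.mapsTo_univ _ _)
    exact congrArg (eVariationOn G) himg
  obtain ⟨t₀, ht₀, hv, hw⟩ := evar_bisect hgc (M := ENNReal.ofReal L) (by
    rw [hgvar, ← ENNReal.ofReal_toReal hfin, ← hldef]
    calc ENNReal.ofReal l < ENNReal.ofReal (2 * L) :=
          (ENNReal.ofReal_lt_ofReal_iff (by positivity)).2 hlL
      _ = 2 * ENNReal.ofReal L := by
          rw [ENNReal.ofReal_mul (by norm_num : (0:ℝ) ≤ 2), ENNReal.ofReal_ofNat])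
  set p := g 0 with hpdef
  set q := g t₀ with hqdef
  have hg1 : g 1 = p := by
    rw [hpdef, hgdef]
    simp only
    rw [Set.projIcc_of_mem zero_le_one (Set.right_mem_Icc.2 zero_le_one),
      Set.projIcc_of_mem zero_le_one (Set.left_mem_Icc.2 zero_le_one)]
    exact hclosed.symm
  have hedist_pq : edist p q ≤ ENNReal.ofReal L :=
    le_trans (eVariationOn.edist_le g (Set.left_mem_Icc.2 ht₀.1)
      (Set.right_mem_Icc.2 ht₀.1)) hv
  have hdist_pq : dist p q ≤ L := by
    rw [edist_dist] at hedist_pq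
    exact (ENNReal.ofReal_le_ofReal_iff hL0.le).1 hedist_pq
  have hkey : ∀ s : unitInterval, dist p (G s) + dist q (G s) ≤ L := by
    intro s
    rw [← hsg s]
    have hsum' : edist p (g s.1) + edist q (g s.1) ≤ ENNReal.ofReal L := by
      rcases le_total (s : ℝ) t₀ with hst | hst
      · have h0s : (0:ℝ) ≤ s.1 := s.2.1
        have e1 : edist p (g s.1) ≤ eVariationOn g (Set.Icc 0 s.1) :=
          eVariationOn.edist_le g (Set.left_mem_Icc.2 h0s) (Set.right_mem_Icc.2 h0s)
        have e2 : edist q (g s.1) ≤ eVariationOn g (Set.Icc s.1 t₀) := by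
          rw [edist_comm]
          exact eVariationOn.edist_le g (Set.left_mem_Icc.2 hst) (Set.right_mem_Icc.2 hst)
        have e3 : eVariationOn g (Set.Icc 0 s.1) + eVariationOn g (Set.Icc s.1 t₀)
            = eVariationOn g (Set.Icc 0 t₀) := by
          have := eVariationOn.Icc_add_Icc g (s := Set.univ) h0s hst (Set.mem_univ s.1)
          simpa using this
        exact le_trans (add_le_add e1 e2) (le_of_eq_of_le e3 hv)
      · have hs1 : s.1 ≤ 1 := s.2.2
        have e1 : edist p (g s.1) ≤ eVariationOn g (Set.Icc s.1 1) := by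
          rw [← hg1, edist_comm]
          exact eVariationOn.edist_le g (Set.left_mem_Icc.2 hs1) (Set.right_mem_Icc.2 hs1)
        have e2 : edist q (g s.1) ≤ eVariationOn g (Set.Icc t₀ s.1) :=
          eVariationOn.edist_le g (Set.left_mem_Icc.2 hst) (Set.right_mem_Icc.2 hst)
        have e3 : eVariationOn g (Set.Icc t₀ s.1) + eVariationOn g (Set.Icc s.1 1)
            = eVariationOn g (Set.Icc t₀ 1) := by
          have := eVariationOn.Icc_add_Icc g (s := Set.univ) hst hs1 (Set.mem_univ s.1)
          simpa using this
        calc edist p (g s.1) + edist q (g s.1)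
            ≤ eVariationOn g (Set.Icc s.1 1) + eVariationOn g (Set.Icc t₀ s.1) :=
              add_le_add e1 e2
          _ = eVariationOn g (Set.Icc t₀ 1) := by rw [add_comm]; exact e3
          _ ≤ ENNReal.ofReal L := hw
    have h4 : ENNReal.ofReal (dist p (g s.1) + dist q (g s.1)) ≤ ENNReal.ofReal L := by
      rw [ENNReal.ofReal_add dist_nonneg dist_nonneg, ← edist_dist, ← edist_dist]
      exact hsum'
    exact (ENNReal.ofReal_le_ofReal_iff hL0.le).1 h4
  obtain ⟨_, hgeo, hcomp⟩ := hY
  obtain ⟨γ, hγ⟩ := hgeo p q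
  set r : ℝ := Real.arccos (Real.cos (Real.sqrt κ * L / 2) ^ 2) / Real.sqrt κ with hrdef
  have hr0 : 0 ≤ r := div_nonneg (Real.arccos_nonneg _) hδ.le
  refine ⟨γ (dist p q / 2), r, hr0, ?_, ?_⟩
  · rw [hmd]
    have h1 : r < Real.pi / Real.sqrt κ / 2 := r0_lt_half_R hκ hL0 hLRmul
    calc ENNReal.ofReal r < ENNReal.ofReal (Real.pi / Real.sqrt κ / 2) :=
          (ENNReal.ofReal_lt_ofReal_iff (by positivity)).2 h1
      _ = ENNReal.ofReal (Real.pi / Real.sqrt κ) / 2 := by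
          rw [ENNReal.ofReal_div_of_pos (by norm_num : (0:ℝ) < 2), ENNReal.ofReal_ofNat]
  · rintro z ⟨s, rfl⟩
    rw [Metric.mem_closedBall]
    have hsum := hkey s
    by_cases hpq0 : dist p q = 0
    · have hpq : p = q := by
        rwa [dist_eq_zero] at hpq0
      have hm : γ (dist p q / 2) = p := by
        rw [hpq0]
        norm_num
        exact hγ.1
      rw [hm, dist_comm]
      rw [← hpq] at hsum
      have hL2r : L / 2 ≤ r := half_le_r0 hκ hL0 hLRmul
      linarith
    · have hpq_pos : 0 < dist p q := lt_of_le_of_ne dist_nonneg (Ne.symm hpq0)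
      have hperim : ENNReal.ofReal (dist p q + dist q (G s) + dist (G s) p)
          < 2 * modelDiam κ := by
        rw [hmd]
        have hb : dist p q + dist q (G s) + dist (G s) p ≤ 2 * L := by
          rw [dist_comm (G s) p]
          linarith
        calc ENNReal.ofReal (dist p q + dist q (G s) + dist (G s) p)
            ≤ ENNReal.ofReal (2 * L) := ENNReal.ofReal_le_ofReal hb
          _ < ENNReal.ofReal (2 * (Real.pi / Real.sqrt κ)) :=
              (ENNReal.ofReal_lt_ofReal_iff (by positivity)).2 (by linarith)
          _ = 2 * ENNReal.ofReal (Real.pi / Real.sqrt κ) := by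
              rw [ENNReal.ofReal_mul (by norm_num : (0:ℝ) ≤ 2), ENNReal.ofReal_ofNat]
      have hcmp := hcomp p q (G s) γ hγ hperim (dist p q / 2)
        ⟨by positivity, by linarith⟩
      rw [dist_comm]
      exact le_trans hcmp
        (trig_bound hκ hL0 hLRmul hpq_pos hdist_pq dist_nonneg dist_nonneg hsum)
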